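/- Let r₂ be a real number with r₂ < 0 and set s = √(−3r₂). Then the function ℘_d(ξ) = −r₂ − 3r₂/ sinh(s·ξ)² is differentiable at every real ξ ≠ 0 with derivative ℘_d'(ξ) = −2·(−3r₂)^(3/2)·cosh(s·ξ)/sinh(s·ξ)³, and for every real ξ ≠ 0 this derivative satisfies the Weierstrass differential equation ℘_d'(ξ)² = 4·℘_d(ξ)³ − 12·r₂²·℘_d(ξ) − 8·r₂³. -/

import Mathlib

/-- Degenerate Weierstrass ℘-function `℘_d(ξ) = −r₂ − 3r₂/sinh(sξ)²`, `s = √(−3r₂)`. -/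
noncomputable def pd (r₂ ξ : ℝ) : ℝ :=
  -r₂ - 3*r₂ / (Real.sinh (Real.sqrt (-3*r₂) * ξ))^2

/-- Its derivative `℘_d'(ξ) = −2(−3r₂)^(3/2)·cosh(sξ)/sinh(sξ)³`. -/
noncomputable def pd' (r₂ ξ : ℝ) : ℝ :=
  -2*(-3*r₂)^((3:ℝ)/2) * Real.cosh (Real.sqrt (-3*r₂) * ξ) /
    (Real.sinh (Real.sqrt (-3*r₂) * ξ))^3

/-- Degenerate Weierstrass ζ-function `ζ_d(ξ) = r₂ξ + s·coth(sξ)`, `s = √(−3r₂)`. -/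
noncomputable def zd (r₂ ξ : ℝ) : ℝ :=
  r₂*ξ + Real.sqrt (-3*r₂) *
    (Real.cosh (Real.sqrt (-3*r₂) * ξ) / Real.sinh (Real.sqrt (-3*r₂) * ξ))

/-- Degenerate Weierstrass σ-function `σ_d(ξ) = exp(r₂ξ²/2)·sinh(sξ)/s`, `s = √(−3r₂)`. -/
noncomputable def sd (r₂ ξ : ℝ) : ℝ :=
  Real.exp (r₂*ξ^2/2) * Real.sinh (Real.sqrt (-3*r₂) * ξ) / Real.sqrt (-3*r₂)

/-- `℘_d` is differentiable away from 0 with derivative `℘_d'`, and satisfies the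
Weierstrass differential equation `(℘_d')² = 4℘_d³ − 12r₂²℘_d − 8r₂³`. -/
theorem stmt_14 (r₂ : ℝ) (hr : r₂ < 0) (ξ : ℝ) (hξ : ξ ≠ 0) :
    HasDerivAt (pd r₂) (pd' r₂ ξ) ξ ∧
    (pd' r₂ ξ)^2 = 4*(pd r₂ ξ)^3 - 12*r₂^2*(pd r₂ ξ) - 8*r₂^3 := by
  set s := Real.sqrt (-3*r₂) with hs
  have h3 : (0:ℝ) < -3*r₂ := by linarith
  have hs2 : s^2 = -3*r₂ := Real.sq_sqrt h3.le
  have hspos : 0 < s := Real.sqrt_pos.mpr h3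
  have hsξ : s * ξ ≠ 0 := mul_ne_zero hspos.ne' hξ
  have hsinh : Real.sinh (s*ξ) ≠ 0 := by
    simpa using Real.sinh_ne_zero.mpr hsξ
  have hkey : (-3*r₂)^((3:ℝ)/2) = s^3 := by
    rw [hs, Real.sqrt_eq_rpow, ← Real.rpow_natCast ((-3*r₂)^((1:ℝ)/2)) 3,
      ← Real.rpow_mul h3.le]
    norm_num
  have hkey2 : s^3 = (-3*r₂)*s := by rw [pow_succ, hs2]
  have hc : Real.cosh (s*ξ)^2 = Real.sinh (s*ξ)^2 + 1 := Real.cosh_sq (s*ξ)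
  constructor
  · have h0 : HasDerivAt (fun x : ℝ => s*x) s ξ := by
      simpa using (hasDerivAt_id ξ).const_mul s
    have h1 := h0.sinh
    have h2 := h1.pow 2
    have h4 := (hasDerivAt_const ξ (3*r₂)).div h2 (pow_ne_zero 2 hsinh)
    have h5 := (hasDerivAt_const ξ (-r₂)).sub h4
    refine h5.congr_deriv ?_
    simp only [pd', Pi.pow_apply]
    rw [hkey, ← hs, hkey2]
    field_simp
    ring
  · simp only [pd, pd']
    rw [hkey, ← hs]
    field_simp
    linear_combination (4*s^6)*hc +
      (4*((Real.sinh (s*ξ))^2+1)*(s^4 - 3*r₂*s^2 + 9*r₂^2))*hs2
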